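/- The generating function ∑_P y_0^{(# white removed)} y_1^{(# black removed)}, summed over all partitions P of the row pyramid R_k, satisfies the recurrence G_k * G_{k-2} = y_0^k y_1^{k-1} + G_{k-1}^2 with G_0 = 1, G_1 = 1 + y_0. Hence G_k equals the k-th Kronecker F-polynomial F_k. -/

import Mathlib

open MvPolynomial

open scoped Classical in
/-- The generating function of partitions of the row pyramid `R_k`, weighting a partition
`(S_w, S_b)` by `y₀^{|S_w|} y₁^{|S_b|}`. -/
noncomputable def rowPartitionFunction (k : ℕ) : MvPolynomial (Fin 2) ℤ :=
  ∑ P ∈ ((Finset.Icc 1 k).powerset ×ˢ (Finset.Icc 1 (k - 1)).powerset).filter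
      (fun P => ∀ i ∈ P.2, i ∈ P.1 ∧ i + 1 ∈ P.1),
    X 0 ^ P.1.card * X 1 ^ P.2.card

open scoped Classical in
noncomputable def rpT (k : ℕ) : Finset (Finset ℕ × Finset ℕ) :=
  ((Finset.Icc 1 k).powerset ×ˢ (Finset.Icc 1 (k - 1)).powerset).filter
      (fun P => ∀ i ∈ P.2, i ∈ P.1 ∧ i + 1 ∈ P.1)

noncomputable def rpw (P : Finset ℕ × Finset ℕ) : MvPolynomial (Fin 2) ℤ :=
  X 0 ^ P.1.card * X 1 ^ P.2.card

lemma rpF_eq (k : ℕ) : rowPartitionFunction k = ∑ P ∈ rpT k, rpw P := rfl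

open scoped Classical in
lemma mem_rpT {k : ℕ} {P : Finset ℕ × Finset ℕ} :
    P ∈ rpT k ↔ P.1 ⊆ Finset.Icc 1 k ∧ P.2 ⊆ Finset.Icc 1 (k-1) ∧
      ∀ i ∈ P.2, i ∈ P.1 ∧ i + 1 ∈ P.1 := by
  simp [rpT, Finset.mem_filter, Finset.mem_product, Finset.mem_powerset, and_assoc]

open scoped Classical in
lemma rpT_filter_not_top {k : ℕ} (hk : 1 ≤ k) :
    (rpT k).filter (fun P => k ∉ P.1) = rpT (k-1) := by
  ext ⟨A, B⟩
  simp only [Finset.mem_filter, mem_rpT]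
  constructor
  · rintro ⟨⟨hA, hB, hc⟩, hk'⟩
    refine ⟨?_, ?_, hc⟩
    · intro a ha
      have h1 := hA ha
      have hne : a ≠ k := fun h => hk' (h ▸ ha)
      simp only [Finset.mem_Icc] at h1 ⊢
      omega
    · intro b hb
      have h1 := hB hb
      have h2 := (hc b hb).2
      have h3 := hA h2
      simp only [Finset.mem_Icc] at *
      have : b + 1 ≠ k := fun h => hk' (h ▸ h2)
      omega
  · rintro ⟨hA, hB, hc⟩
    refine ⟨⟨?_, ?_, hc⟩, ?_⟩
    · exact hA.trans (Finset.Icc_subset_Icc_right (by omega))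
    · exact hB.trans (Finset.Icc_subset_Icc_right (by omega))
    · intro h
      have := hA h
      simp only [Finset.mem_Icc] at this
      omega

open scoped Classical in
lemma rpT_sum_top_noblack {k : ℕ} (hk : 1 ≤ k) :
    ∑ P ∈ (rpT k).filter (fun P => k ∈ P.1 ∧ (k-1) ∉ P.2), rpw P
      = X 0 * ∑ P ∈ rpT (k-1), rpw P := by
  rw [Finset.mul_sum]
  refine Finset.sum_nbij' (fun P => (P.1.erase k, P.2)) (fun P => (insert k P.1, P.2))
    ?_ ?_ ?_ ?_ ?_
  · rintro ⟨A, B⟩ hP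
    simp only [Finset.mem_filter, mem_rpT] at hP ⊢
    obtain ⟨⟨hA, hB, hc⟩, hkA, hkB⟩ := hP
    refine ⟨?_, ?_, ?_⟩
    · intro a ha
      simp only [Finset.mem_erase] at ha
      have := hA ha.2
      simp only [Finset.mem_Icc] at this ⊢
      have := ha.1
      omega
    · intro b hb
      have h1 := hB hb
      have h2 := (hc b hb).2
      have h3 := hA h2
      have hne : b ≠ k - 1 := fun h => hkB (h ▸ hb)
      simp only [Finset.mem_Icc] at *
      omega
    · intro i hi
      have h1 := hB hi
      simp only [Finset.mem_Icc] at h1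
      have hne : i ≠ k - 1 := fun h => hkB (h ▸ hi)
      obtain ⟨h2, h3⟩ := hc i hi
      exact ⟨Finset.mem_erase.2 ⟨by omega, h2⟩, Finset.mem_erase.2 ⟨by omega, h3⟩⟩
  · rintro ⟨A, B⟩ hP
    simp only [Finset.mem_filter, mem_rpT] at hP ⊢
    obtain ⟨hA, hB, hc⟩ := hP
    refine ⟨⟨?_, ?_, ?_⟩, ?_, ?_⟩
    · intro a ha
      simp only [Finset.mem_insert] at ha
      rcases ha with rfl | ha
      · simp only [Finset.mem_Icc]; omega
      · exact (hA.trans (Finset.Icc_subset_Icc_right (by omega))) ha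
    · exact hB.trans (Finset.Icc_subset_Icc_right (by omega))
    · intro i hi
      obtain ⟨h2, h3⟩ := hc i hi
      exact ⟨Finset.mem_insert_of_mem h2, Finset.mem_insert_of_mem h3⟩
    · exact Finset.mem_insert_self k A
    · intro h
      have := hB h
      simp only [Finset.mem_Icc] at this
      omega
  · rintro ⟨A, B⟩ hP
    simp only [Finset.mem_filter, mem_rpT] at hP
    simp [Finset.insert_erase hP.2.1]
  · rintro ⟨A, B⟩ hP
    simp only [mem_rpT] at hP
    have : k ∉ A := by
      intro h
      have := hP.1 h
      simp only [Finset.mem_Icc] at this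
      omega
    simp [Finset.erase_insert this]
  · rintro ⟨A, B⟩ hP
    simp only [Finset.mem_filter, mem_rpT] at hP
    have hcard : A.card = (A.erase k).card + 1 := by
      rw [Finset.card_erase_of_mem hP.2.1]
      have := Finset.card_pos.2 ⟨k, hP.2.1⟩
      omega
    simp only [rpw, hcard]
    ring

open scoped Classical in
lemma rpT_sum_top_black {k : ℕ} (hk : 2 ≤ k) :
    ∑ P ∈ (rpT k).filter (fun P => k ∈ P.1 ∧ (k-1) ∈ P.2), rpw P
      = X 0 * X 1 * ∑ P ∈ (rpT (k-1)).filter (fun P => (k-1) ∈ P.1), rpw P := by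
  rw [Finset.mul_sum]
  refine Finset.sum_nbij' (fun P => (P.1.erase k, P.2.erase (k-1)))
    (fun P => (insert k P.1, insert (k-1) P.2)) ?_ ?_ ?_ ?_ ?_
  · rintro ⟨A, B⟩ hP
    simp only [Finset.mem_filter, mem_rpT] at hP ⊢
    obtain ⟨⟨hA, hB, hc⟩, hkA, hkB⟩ := hP
    refine ⟨⟨?_, ?_, ?_⟩, ?_⟩
    · intro a ha
      simp only [Finset.mem_erase] at ha
      have := hA ha.2
      have := ha.1
      simp only [Finset.mem_Icc] at *
      omega
    · intro b hb
      simp only [Finset.mem_erase] at hb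
      have h1 := hB hb.2
      have := hb.1
      simp only [Finset.mem_Icc] at *
      omega
    · intro i hi
      simp only [Finset.mem_erase] at hi
      have h1 := hB hi.2
      simp only [Finset.mem_Icc] at h1
      obtain ⟨h2, h3⟩ := hc i hi.2
      exact ⟨Finset.mem_erase.2 ⟨by omega, h2⟩, Finset.mem_erase.2 ⟨by omega, h3⟩⟩
    · exact Finset.mem_erase.2 ⟨by omega, (hc (k-1) hkB).1⟩
  · rintro ⟨A, B⟩ hP
    simp only [Finset.mem_filter, mem_rpT] at hP ⊢
    obtain ⟨⟨hA, hB, hc⟩, hkA⟩ := hP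
    refine ⟨⟨?_, ?_, ?_⟩, ?_, ?_⟩
    · intro a ha
      simp only [Finset.mem_insert] at ha
      rcases ha with rfl | ha
      · simp only [Finset.mem_Icc]; omega
      · exact (hA.trans (Finset.Icc_subset_Icc_right (by omega))) ha
    · intro b hb
      simp only [Finset.mem_insert] at hb
      rcases hb with rfl | hb
      · simp only [Finset.mem_Icc]; omega
      · exact (hB.trans (Finset.Icc_subset_Icc_right (by omega))) hb
    · intro i hi
      simp only [Finset.mem_insert] at hi
      rcases hi with rfl | hi
      · refine ⟨Finset.mem_insert_of_mem hkA, ?_⟩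
        have : k - 1 + 1 = k := by omega
        rw [this]
        exact Finset.mem_insert_self k A
      · obtain ⟨h2, h3⟩ := hc i hi
        exact ⟨Finset.mem_insert_of_mem h2, Finset.mem_insert_of_mem h3⟩
    · exact Finset.mem_insert_self k A
    · exact Finset.mem_insert_self (k-1) B
  · rintro ⟨A, B⟩ hP
    simp only [Finset.mem_filter, mem_rpT] at hP
    simp [Finset.insert_erase hP.2.1, Finset.insert_erase hP.2.2]
  · rintro ⟨A, B⟩ hP
    simp only [Finset.mem_filter, mem_rpT] at hP
    obtain ⟨⟨hA, hB, _⟩, _⟩ := hP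
    have h1 : k ∉ A := by
      intro h; have := hA h; simp only [Finset.mem_Icc] at this; omega
    have h2 : k - 1 ∉ B := by
      intro h; have := hB h; simp only [Finset.mem_Icc] at this; omega
    simp [Finset.erase_insert h1, Finset.erase_insert h2]
  · rintro ⟨A, B⟩ hP
    simp only [Finset.mem_filter, mem_rpT] at hP
    have hcA : A.card = (A.erase k).card + 1 := by
      rw [Finset.card_erase_of_mem hP.2.1]
      have := Finset.card_pos.2 ⟨k, hP.2.1⟩
      omega
    have hcB : B.card = (B.erase (k-1)).card + 1 := by
      rw [Finset.card_erase_of_mem hP.2.2]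
      have := Finset.card_pos.2 ⟨k-1, hP.2.2⟩
      omega
    simp only [rpw, hcA, hcB]
    ring

lemma rpF0 : rowPartitionFunction 0 = 1 := by
  rw [rpF_eq]
  have h : rpT 0 = {(∅, ∅)} := by
    ext ⟨A, B⟩
    simp only [mem_rpT, Finset.mem_singleton, Prod.mk.injEq]
    have h0 : Finset.Icc 1 0 = (∅ : Finset ℕ) := by simp
    rw [h0]
    simp only [Nat.zero_sub, h0, Finset.subset_empty]
    constructor
    · rintro ⟨h1, h2, _⟩; exact ⟨h1, h2⟩
    · rintro ⟨rfl, rfl⟩; simp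
  rw [h]
  simp [rpw]

lemma rpF1 : rowPartitionFunction 1 = 1 + X 0 := by
  rw [rpF_eq]
  have h : rpT 1 = {(∅, ∅), ({1}, ∅)} := by
    ext ⟨A, B⟩
    simp only [mem_rpT, Finset.mem_insert, Finset.mem_singleton, Prod.mk.injEq]
    have h1 : Finset.Icc 1 1 = ({1} : Finset ℕ) := by simp
    have h0 : Finset.Icc 1 0 = (∅ : Finset ℕ) := by simp
    rw [h1, h0, Finset.subset_singleton_iff, Finset.subset_empty]
    constructor
    · rintro ⟨hA, rfl, _⟩
      rcases hA with rfl | rfl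
      · left; exact ⟨rfl, rfl⟩
      · right; exact ⟨rfl, rfl⟩
    · rintro (⟨rfl, rfl⟩ | ⟨rfl, rfl⟩) <;> simp
  rw [h]
  rw [Finset.sum_insert (by simp [Prod.ext_iff])]
  simp [rpw]

open scoped Classical in
lemma rpH {m : ℕ} (hm : 1 ≤ m) :
    ∑ P ∈ (rpT m).filter (fun P => m ∈ P.1), rpw P
      = rowPartitionFunction m - rowPartitionFunction (m-1) := by
  have := Finset.sum_filter_add_sum_filter_not (rpT m) (fun P => m ∈ P.1) rpw
  rw [rpT_filter_not_top hm] at this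
  rw [rpF_eq m, rpF_eq (m-1), ← this]
  ring

open scoped Classical in
lemma rpLinRec {k : ℕ} (hk : 2 ≤ k) :
    rowPartitionFunction k + X 0 * X 1 * rowPartitionFunction (k-2)
      = (1 + X 0 + X 0 * X 1) * rowPartitionFunction (k-1) := by
  have hsplit := Finset.sum_filter_add_sum_filter_not (rpT k) (fun P => k ∈ P.1) rpw
  have hsplit2 := Finset.sum_filter_add_sum_filter_not
    ((rpT k).filter (fun P => k ∈ P.1)) (fun P => (k-1) ∈ P.2) rpw
  rw [Finset.filter_filter, Finset.filter_filter] at hsplit2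
  rw [rpT_filter_not_top (by omega)] at hsplit
  have h2 := rpT_sum_top_black hk
  have h3 := rpT_sum_top_noblack (show 1 ≤ k by omega)
  have h4 := rpH (show 1 ≤ k - 1 by omega)
  have e1 : k - 1 - 1 = k - 2 := by omega
  rw [e1] at h4
  rw [rpF_eq k, ← hsplit, ← hsplit2, h2, h3, h4, ← rpF_eq (k-1)]
  ring

lemma rpLinRec' (m : ℕ) :
    rowPartitionFunction (m+2) + X 0 * X 1 * rowPartitionFunction m
      = (1 + X 0 + X 0 * X 1) * rowPartitionFunction (m+1) := by
  have := rpLinRec (k := m+2) (by omega)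
  simpa using this

lemma rpQuad (m : ℕ) :
    rowPartitionFunction (m+2) * rowPartitionFunction m =
      X 0 ^ (m+2) * X 1 ^ (m+1) + rowPartitionFunction (m+1) ^ 2 := by
  induction m with
  | zero =>
      have h := rpLinRec' 0
      rw [rpF0, rpF1] at h ⊢
      have h2 : rowPartitionFunction 2 = (1 + X 0 + X 0 * X 1) * (1 + X 0) - X 0 * X 1 * 1 := by
        linear_combination h
      rw [h2]; ring
  | succ n ih =>
      have h1 := rpLinRec' (n+1)
      have h2 := rpLinRec' n
      linear_combination rowPartitionFunction (n+1) * h1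
        - rowPartitionFunction (n+2) * h2 + (X 0 * X 1) * ih

lemma rpEvalZero (m : ℕ) : MvPolynomial.eval (fun _ => (0:ℤ)) (rowPartitionFunction m) = 1 := by
  induction m using Nat.strong_induction_on with
  | _ m ih =>
    match m with
    | 0 => simp [rpF0]
    | 1 => simp [rpF1]
    | (n+2) =>
      have h := rpLinRec' n
      have := congrArg (MvPolynomial.eval (fun _ => (0:ℤ))) h
      simp only [map_add, map_mul, map_one, MvPolynomial.eval_X] at this
      rw [ih (n+1) (by omega)] at this
      linarith [this]

lemma rpNeZero (m : ℕ) : rowPartitionFunction m ≠ 0 := by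
  intro h
  have := rpEvalZero m
  rw [h] at this
  simp at this


/-- The partition function `G_k` of the row pyramid `R_k` satisfies `G₀ = 1`,
`G₁ = 1 + y₀`, and `G_k G_{k-2} = y₀^k y₁^{k-1} + G_{k-1}²`; hence it coincides with the
Kronecker F-polynomial `F_k` defined by the same recurrence. -/
theorem rowPartitionFunction_eq_kronecker_F :
    rowPartitionFunction 0 = 1 ∧
    rowPartitionFunction 1 = 1 + X 0 ∧
    (∀ k, 2 ≤ k →
      rowPartitionFunction k * rowPartitionFunction (k - 2) =
        X 0 ^ k * X 1 ^ (k - 1) + rowPartitionFunction (k - 1) ^ 2) ∧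
    (∀ F : ℕ → MvPolynomial (Fin 2) ℤ,
      F 0 = 1 → F 1 = X 0 + 1 →
      (∀ k, 2 ≤ k → F k * F (k - 2) = X 0 ^ k * X 1 ^ (k - 1) + F (k - 1) ^ 2) →
      ∀ k, F k = rowPartitionFunction k) := by
  have quad : ∀ k, 2 ≤ k →
      rowPartitionFunction k * rowPartitionFunction (k - 2) =
        X 0 ^ k * X 1 ^ (k - 1) + rowPartitionFunction (k - 1) ^ 2 := by
    intro k hk
    obtain ⟨m, rfl⟩ : ∃ m, k = m + 2 := ⟨k - 2, by omega⟩
    simpa using rpQuad m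
  refine ⟨rpF0, rpF1, quad, ?_⟩
  intro F hF0 hF1 hFrec k
  induction k using Nat.strong_induction_on with
  | _ k ih =>
    match k with
    | 0 => rw [hF0, rpF0]
    | 1 => rw [hF1, rpF1]; ring
    | (n+2) =>
      have h1 := hFrec (n+2) (by omega)
      have e : n + 2 - 1 = n + 1 := rfl
      simp only [Nat.add_sub_cancel, e] at h1
      rw [ih n (by omega), ih (n+1) (by omega)] at h1
      have h2 := quad (n+2) (by omega)
      simp only [Nat.add_sub_cancel, e] at h2
      have h3 : F (n+2) * rowPartitionFunction n
          = rowPartitionFunction (n+2) * rowPartitionFunction n := by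
        rw [h1, h2]
      exact mul_right_cancel₀ (rpNeZero n) h3
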